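/- If a resolvable Golomb ruler RGR(k,L) exists (with k ≥ 2), then L - ⌊L/k⌋ ≥ k(k-1)/2. -/

import Mathlib

/-- A Golomb ruler: a finite set of integers all of whose differences of
ordered pairs of distinct elements are pairwise distinct. -/
def IsGolombRuler (X : Finset ℤ) : Prop :=
  ∀ a ∈ X, ∀ b ∈ X, ∀ c ∈ X, ∀ d ∈ X,
    a - b = c - d → (a = b ∧ c = d) ∨ (a = c ∧ b = d)

/-- `X` has length `L`: the difference between its maximum and minimum elements is `L`. -/
def HasLength (X : Finset ℤ) (L : ℕ) : Prop :=
  ∃ m ∈ X, ∃ M ∈ X, (∀ x ∈ X, m ≤ x ∧ x ≤ M) ∧ M - m = (L : ℤ)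

/-- The elements of `X` cover all `k` residue classes modulo `k`. -/
def CoversResidues (k : ℕ) (X : Finset ℤ) : Prop :=
  ∀ r : ZMod k, ∃ x ∈ X, (x : ZMod k) = r

/-- A resolvable Golomb ruler RGR(k,L). -/
def IsRGR (k L : ℕ) (X : Finset ℤ) : Prop :=
  X.card = k ∧ IsGolombRuler X ∧ HasLength X L ∧ CoversResidues k X

noncomputable def pd (t : Finset ℤ) : ℕ := ((WithBot.unbotD 0 t.max) - (WithTop.untopD 0 t.min)).toNat

lemma pd_pair {a b : ℤ} (hab : a < b) : pd {a, b} = (b - a).toNat := by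
  unfold pd
  rw [Finset.max_insert, Finset.max_singleton, Finset.min_insert, Finset.min_singleton]
  have h1 : (↑a ⊔ (↑b : WithBot ℤ)) = ↑(a ⊔ b) := by simp
  have h2 : (↑a ⊓ (↑b : WithTop ℤ)) = ↑(a ⊓ b) := by simp
  rw [h1, h2]
  simp [sup_eq_right.mpr hab.le, inf_eq_left.mpr hab.le]


/-- If a resolvable Golomb ruler RGR(k,L) exists (k ≥ 2), then
`L - ⌊L/k⌋ ≥ k(k-1)/2`. -/
theorem rgr_counting_bound (k L : ℕ) (hk : 2 ≤ k)
    (h : ∃ X : Finset ℤ, IsRGR k L X) :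
    L - L / k ≥ k * (k - 1) / 2 := by
  obtain ⟨X, hcard, hG, ⟨m, hm, M, hM, hbound, hlen⟩, hres⟩ := h
  have hkpos : 0 < k := by omega
  -- injectivity of residue map on X
  have hinj : Set.InjOn (fun x : ℤ => (x : ZMod k)) X := by
    have : NeZero k := ⟨hkpos.ne'⟩
    apply Finset.injOn_of_card_image_eq
    have himg : X.image (fun x : ℤ => (x : ZMod k)) = Finset.univ := by
      apply Finset.eq_univ_of_forall
      intro r
      obtain ⟨x, hx, hxr⟩ := hres r
      exact Finset.mem_image.mpr ⟨x, hx, hxr⟩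
    rw [himg, Finset.card_univ, ZMod.card k, hcard]
  -- target set
  set T : Finset ℕ := (Finset.Ioc 0 L).filter (fun d => ¬ (k ∣ d)) with hT
  have hTcard : T.card = L - L / k := by
    have h1 := Finset.card_filter_add_card_filter_not
      (s := Finset.Ioc 0 L) (p := fun d => k ∣ d)
    have h2 := Nat.Ioc_filter_dvd_card_eq_div L k
    simp only [Nat.card_Ioc, Nat.sub_zero] at h1
    rw [hT]
    omega
  -- injection from 2-subsets
  have hmain : (X.powersetCard 2).card ≤ T.card := by
    apply Finset.card_le_card_of_injOn pd
    · intro t ht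
      rw [Finset.mem_coe, Finset.mem_powersetCard] at ht
      obtain ⟨hsub, ht2⟩ := ht
      obtain ⟨a, b, hab, rfl⟩ := Finset.card_eq_two.mp ht2
      have ha : a ∈ X := hsub (by simp)
      have hb : b ∈ X := hsub (by simp)
      rcases hab.lt_or_gt with hlt | hlt
      case _ =>
        rw [pd_pair hlt]
        rw [hT, Finset.mem_coe, Finset.mem_filter, Finset.mem_Ioc]
        have hba : (0:ℤ) < b - a := by omega
        have hle : b - a ≤ (L:ℤ) := by
          have h1 := hbound a ha
          have h2 := hbound b hb
          omega
        refine ⟨⟨by omega, by omega⟩, ?_⟩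
        intro hdvd
        have : (k:ℤ) ∣ (b - a) := by
          have := Int.natCast_dvd_natCast.mpr hdvd
          rwa [Int.toNat_of_nonneg hba.le] at this
        have : (b : ZMod k) = (a : ZMod k) := by
          have := (ZMod.intCast_zmod_eq_zero_iff_dvd (b - a) k).mpr this
          push_cast at this
          linear_combination this
        exact hab (hinj ha hb this.symm)
      case _ =>
        rw [Finset.pair_comm, pd_pair hlt]
        rw [hT, Finset.mem_coe, Finset.mem_filter, Finset.mem_Ioc]
        have hba : (0:ℤ) < a - b := by omega
        have hle : a - b ≤ (L:ℤ) := by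
          have h1 := hbound a ha
          have h2 := hbound b hb
          omega
        refine ⟨⟨by omega, by omega⟩, ?_⟩
        intro hdvd
        have : (k:ℤ) ∣ (a - b) := by
          have := Int.natCast_dvd_natCast.mpr hdvd
          rwa [Int.toNat_of_nonneg hba.le] at this
        have : (a : ZMod k) = (b : ZMod k) := by
          have := (ZMod.intCast_zmod_eq_zero_iff_dvd (a - b) k).mpr this
          push_cast at this
          linear_combination this
        exact hab (hinj ha hb this)
    · have main : ∀ a b c d : ℤ, a ∈ X → b ∈ X → c ∈ X → d ∈ X → a < b → c < d →
          pd {a, b} = pd {c, d} → ({a, b} : Finset ℤ) = {c, d} := by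
        intro a b c d ha hb hc hd h1 h2 heq
        rw [pd_pair h1, pd_pair h2] at heq
        have hbd : b - a = d - c := by omega
        rcases hG b hb a ha d hd c hc hbd with ⟨h3, _⟩ | ⟨h3, h4⟩
        · omega
        · rw [h3, h4]
      intro t1 ht1 t2 ht2 heq
      rw [Finset.mem_coe, Finset.mem_powersetCard] at ht1 ht2
      obtain ⟨hsub1, hc1⟩ := ht1
      obtain ⟨hsub2, hc2⟩ := ht2
      obtain ⟨a, b, hab, rfl⟩ := Finset.card_eq_two.mp hc1
      obtain ⟨c, d, hcd, rfl⟩ := Finset.card_eq_two.mp hc2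
      have ha : a ∈ X := hsub1 (by simp)
      have hb : b ∈ X := hsub1 (by simp)
      have hc : c ∈ X := hsub2 (by simp)
      have hd : d ∈ X := hsub2 (by simp)
      rcases hab.lt_or_gt with h1 | h1 <;> rcases hcd.lt_or_gt with h2 | h2
      · exact main a b c d ha hb hc hd h1 h2 heq
      · rw [Finset.pair_comm c d] at heq ⊢
        exact main a b d c ha hb hd hc h1 h2 heq
      · rw [Finset.pair_comm a b] at heq ⊢
        exact main b a c d hb ha hc hd h1 h2 heq
      · rw [Finset.pair_comm a b, Finset.pair_comm c d] at heq ⊢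
        exact main b a d c hb ha hd hc h1 h2 heq
  have hpc : (X.powersetCard 2).card = k * (k - 1) / 2 := by
    rw [Finset.card_powersetCard, hcard, Nat.choose_two_right]
  omega
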